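/- A nonzero R-module M is finitely embedded if and only if for any family {M_i}_{i∈I} of submodules of M, the intersection ∩_{i∈I} M_i is nonzero whenever the intersection of any finite number of the M_i is nonzero. -/

import Mathlib

universe u

/-- A linear map is a pure monomorphism if it is injective and remains injective after
tensoring with every `R`-module. -/
def IsPureMono (R : Type u) [CommRing R] {M N : Type u} [AddCommGroup M] [Module R M]
    [AddCommGroup N] [Module R N] (f : M →ₗ[R] N) : Prop :=
  Function.Injective f ∧
    ∀ (L : Type u) [AddCommGroup L] [Module R L], Function.Injective (LinearMap.rTensor L f)

/-- A module `D` is pure injective if every homomorphism into `D` extends along every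
pure monomorphism. -/
def IsPureInjective (R : Type u) [CommRing R] (D : Type u) [AddCommGroup D] [Module R D] :
    Prop :=
  ∀ (M N : Type u) [AddCommGroup M] [Module R M] [AddCommGroup N] [Module R N]
    (f : M →ₗ[R] N), IsPureMono R f → ∀ g : M →ₗ[R] D, ∃ h : N →ₗ[R] D, h ∘ₗ f = g

/-- A module is finitely embedded if it embeds into the injective envelope of a direct sum
of finitely many simple modules, i.e. into an injective module which is an essential
extension of a finitely generated semisimple submodule. -/
def FinitelyEmbedded (R : Type u) [CommRing R] (M : Type u) [AddCommGroup M] [Module R M] :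
    Prop :=
  ∃ E : ModuleCat.{u} R, Module.Injective R E ∧
    ∃ S : Submodule R E, IsSemisimpleModule R S ∧ S.FG ∧
      (∀ P : Submodule R E, P ≠ ⊥ → S ⊓ P ≠ ⊥) ∧
      ∃ f : M →ₗ[R] E, Function.Injective f


open Submodule

section Helpers
variable {R : Type u} [CommRing R]

/-- In a family of pairwise comparable submodules, any finite subfamily has a least member. -/
lemma FE.exists_min_of_chain {ι : Type*} {X : Type*} [AddCommGroup X] [Module R X]
    (N : ι → Submodule R X) (hcomp : ∀ i j, N i ≤ N j ∨ N j ≤ N i)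
    (s : Finset ι) (hs : s.Nonempty) : ∃ j ∈ s, ∀ i ∈ s, N j ≤ N i := by
  classical
  induction s using Finset.induction with
  | empty => exact absurd hs (by simp)
  | @insert a t ha ih =>
    rcases t.eq_empty_or_nonempty with rfl | ht
    · exact ⟨a, by simp⟩
    · obtain ⟨j, hj, hjmin⟩ := ih ht
      rcases hcomp a j with h | h
      · exact ⟨a, Finset.mem_insert_self _ _, by
          intro i hi
          rcases Finset.mem_insert.1 hi with rfl | hi
          · exact le_rfl
          · exact h.trans (hjmin i hi)⟩
      · exact ⟨j, Finset.mem_insert_of_mem hj, by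
          intro i hi
          rcases Finset.mem_insert.1 hi with rfl | hi
          · exact h
          · exact hjmin i hi⟩

lemma FE.chain_finset_iInf_ne_bot {ι : Type*} {X : Type*} [AddCommGroup X] [Module R X]
    [Nontrivial X] (N : ι → Submodule R X) (hcomp : ∀ i j, N i ≤ N j ∨ N j ≤ N i)
    (hne : ∀ i, N i ≠ ⊥) (s : Finset ι) : (⨅ i ∈ s, N i) ≠ ⊥ := by
  rcases s.eq_empty_or_nonempty with rfl | hs
  · simp
  · obtain ⟨j, hj, hjmin⟩ := FE.exists_min_of_chain N hcomp s hs
    intro h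
    exact hne j (le_bot_iff.1 (h ▸ le_iInf₂ fun i hi => hjmin i hi))

end Helpers
section Socle
variable {R : Type u} [CommRing R] (X : Type u) [AddCommGroup X] [Module R X]

variable (R) in
/-- The socle: the sup of all simple submodules. -/
def FE.socle : Submodule R X := sSup {m : Submodule R X | IsSimpleModule R m}

lemma FE.socle_isSemisimple : IsSemisimpleModule R ↥(FE.socle R X) := by
  rw [FE.socle, sSup_eq_iSup]
  exact isSemisimpleModule_biSup_of_isSemisimpleModule_submodule
    (fun m hm => by haveI : IsSimpleModule R ↥m := hm; infer_instance)

variable {X}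

lemma FE.socle_essential [Nontrivial X]
    (hFIP : ∀ (ι : Type u) (N : ι → Submodule R X),
      (∀ s : Finset ι, (⨅ i ∈ s, N i) ≠ ⊥) → (⨅ i, N i) ≠ ⊥)
    (P : Submodule R X) (hP : P ≠ ⊥) : FE.socle R X ⊓ P ≠ ⊥ := by
  by_contra h
  have hnosimple : ∀ m : Submodule R X, m ≤ P → ¬ IsSimpleModule R m := by
    intro m hmP hm
    have hbot : m = ⊥ := le_bot_iff.1 (h ▸ le_inf (le_sSup hm) hmP)
    haveI := hm
    have := IsSimpleModule.nontrivial (R := R) (M := ↥m)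
    rw [hbot] at this
    exact not_nontrivial ↥(⊥ : Submodule R X) this
  set 𝒮 : Set (Submodule R X) := {Q | Q ≤ P ∧ Q ≠ ⊥} with h𝒮
  have hP𝒮 : P ∈ 𝒮 := ⟨le_rfl, hP⟩
  obtain ⟨c, hc, hsub⟩ :=
    (IsChain.singleton (r := ((· ≤ ·) : ↥𝒮 → ↥𝒮 → Prop)) (a := ⟨P, hP𝒮⟩)).exists_maxChain
  have hPc : (⟨P, hP𝒮⟩ : ↥𝒮) ∈ c := hsub rfl
  set K : Submodule R X := ⨅ Q : c, ((Q : ↥𝒮) : Submodule R X) with hK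
  have hcomp : ∀ Q₁ Q₂ : c, ((Q₁ : ↥𝒮) : Submodule R X) ≤ (Q₂ : ↥𝒮)
      ∨ ((Q₂ : ↥𝒮) : Submodule R X) ≤ (Q₁ : ↥𝒮) := by
    intro Q₁ Q₂
    by_cases hq : (Q₁ : ↥𝒮) = (Q₂ : ↥𝒮)
    · exact Or.inl (le_of_eq (congrArg _ hq))
    · exact hc.isChain Q₁.2 Q₂.2 hq
  have hKne : K ≠ ⊥ :=
    hFIP c (fun Q => ((Q : ↥𝒮) : Submodule R X))
      (FE.chain_finset_iInf_ne_bot _ hcomp (fun Q => (Q : ↥𝒮).2.2))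
  have hKP : K ≤ P := iInf_le _ (⟨⟨P, hP𝒮⟩, hPc⟩ : c)
  have hKatom : ¬ IsAtom K := by
    rw [← isSimpleModule_iff_isAtom]
    exact hnosimple K hKP
  rw [IsAtom, not_and_or] at hKatom
  rcases hKatom with h' | h'
  · exact h' hKne
  push_neg at h'
  obtain ⟨K', hK'lt, hK'ne⟩ := h'
  have hK'𝒮 : K' ∈ 𝒮 := ⟨hK'lt.le.trans hKP, hK'ne⟩
  have hins : IsChain (· ≤ ·) (insert (⟨K', hK'𝒮⟩ : ↥𝒮) c) := by
    refine hc.isChain.insert fun Q hQ _ => Or.inl ?_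
    exact Subtype.coe_le_coe.1
      (show K' ≤ (Q : Submodule R X) from hK'lt.le.trans (iInf_le _ (⟨Q, hQ⟩ : c)))
  have hceq : c = insert (⟨K', hK'𝒮⟩ : ↥𝒮) c := hc.2 hins (Set.subset_insert _ _)
  have hK'c : (⟨K', hK'𝒮⟩ : ↥𝒮) ∈ c := hceq ▸ Set.mem_insert _ _
  have : K ≤ K' := iInf_le _ (⟨⟨K', hK'𝒮⟩, hK'c⟩ : c)
  exact absurd (this.trans_lt hK'lt) (lt_irrefl _)

end Socle
section SocleFG
variable {R : Type u} [CommRing R] {X : Type u} [AddCommGroup X] [Module R X]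

lemma FE.socle_fg [Nontrivial X]
    (hFIP : ∀ (ι : Type u) (N : ι → Submodule R X),
      (∀ s : Finset ι, (⨅ i ∈ s, N i) ≠ ⊥) → (⨅ i, N i) ≠ ⊥) :
    (FE.socle R X).FG := by
  set S := FE.socle R X with hS
  haveI : IsSemisimpleModule R ↥S := FE.socle_isSemisimple X
  suffices hart : IsArtinian R ↥S by
    haveI : Module.Finite R ↥S := (IsSemisimpleModule.finite_tfae.out 2 0).mp hart
    exact Module.Finite.iff_fg.mp this
  rw [isArtinian_iff, RelEmbedding.wellFounded_iff_isEmpty]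
  by_contra hdesc
  rw [not_isEmpty_iff] at hdesc
  obtain ⟨e⟩ := hdesc
  set f : ℕ → Submodule R ↥S := fun n => e n with hfdef
  have hf : ∀ n, f (n + 1) < f n := fun n => e.map_rel_iff.2 (Nat.lt_succ_self n)
  have hfanti : Antitone f := (strictAnti_nat_of_succ_lt hf).antitone
  set g : ℕ → Submodule R X := fun n => map S.subtype (f n) with hgdef
  set K : Submodule R X := ⨅ n, g n with hKdef
  set K₀ : Submodule R ↥S := comap S.subtype K with hK₀def
  have hKS : K ≤ S := (iInf_le g 0).trans (map_subtype_le _ _)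
  have hfn : ∀ n, f n = comap S.subtype (g n) :=
    fun n => (comap_map_eq_of_injective S.injective_subtype (f n)).symm
  have hK₀f : ∀ n, K₀ ≤ f n := fun n => by
    rw [hfn n]; exact comap_mono (iInf_le g n)
  have hiInff : ⨅ n, f n = K₀ := by
    rw [hK₀def, hKdef, comap_iInf]
    exact iInf_congr hfn
  obtain ⟨C, hC⟩ := exists_isCompl K₀
  set h : ℕ → Submodule R ↥S := fun n => C ⊓ f n with hhdef
  have hmod : ∀ n, K₀ ⊔ h n = f n := by
    intro n
    show K₀ ⊔ (C ⊓ f n) = f n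
    rw [← sup_inf_assoc_of_le C (hK₀f n), hC.sup_eq_top, top_inf_eq]
  have hhanti : Antitone h := fun n m hnm => inf_le_inf_left _ (hfanti hnm)
  have hstrict : ∀ n, h (n + 1) < h n := by
    intro n
    refine lt_of_le_of_ne (hhanti (Nat.le_succ n)) fun heq => ?_
    have : f (n + 1) = f n := by rw [← hmod, ← hmod, heq]
    exact absurd this (hf n).ne
  have hhne : ∀ n, h n ≠ ⊥ := fun n => fun hbot =>
    absurd ((hbot ▸ hstrict n) : h (n + 1) < ⊥) (by simp)
  set N' : ULift.{u} ℕ → Submodule R X := fun n => map S.subtype (h n.down) with hN'def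
  have hN'comp : ∀ i j, N' i ≤ N' j ∨ N' j ≤ N' i := by
    intro i j
    rcases le_total i.down j.down with hij | hij
    · exact Or.inr (map_mono (hhanti hij))
    · exact Or.inl (map_mono (hhanti hij))
  have hN'ne : ∀ i, N' i ≠ ⊥ := by
    intro i
    obtain ⟨x, hx, hx0⟩ := (Submodule.ne_bot_iff _).1 (hhne i.down)
    exact (Submodule.ne_bot_iff _).2
      ⟨S.subtype x, mem_map_of_mem hx, by simpa using hx0⟩
  have hcon := hFIP (ULift.{u} ℕ) N' (FE.chain_finset_iInf_ne_bot N' hN'comp hN'ne)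
  obtain ⟨x, hx, hx0⟩ := (Submodule.ne_bot_iff _).1 hcon
  have hxm : ∀ n : ℕ, x ∈ map S.subtype (h n) := fun n => (Submodule.mem_iInf _).1 hx ⟨n⟩
  obtain ⟨y0, _, hy0⟩ := hxm 0
  have hym : ∀ n : ℕ, y0 ∈ h n := by
    intro n
    obtain ⟨y, hy, hyx⟩ := hxm n
    have : y = y0 := S.injective_subtype (by rw [hyx, hy0])
    rwa [this] at hy
  have hyC : y0 ∈ C := (inf_le_left : C ⊓ f 0 ≤ C) (hym 0)
  have hyK₀ : y0 ∈ K₀ := by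
    rw [← hiInff]
    exact (Submodule.mem_iInf _).2 fun n => (inf_le_right : C ⊓ f n ≤ f n) (hym n)
  have : y0 = 0 := by
    have := hC.inf_eq_bot ▸ (mem_inf.2 ⟨hyK₀, hyC⟩)
    simpa using this
  rw [this] at hy0
  exact hx0 (by simpa using hy0.symm)

end SocleFG

section Forward
variable {R : Type u} [CommRing R] {M : Type u} [AddCommGroup M] [Module R M]

lemma FE.forward [Nontrivial M] (hfe : FinitelyEmbedded R M) :
    ∀ (ι : Type u) (N : ι → Submodule R M),
      (∀ s : Finset ι, (⨅ i ∈ s, N i) ≠ ⊥) → (⨅ i, N i) ≠ ⊥ := by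
  obtain ⟨E, hEinj, S, hSS, hFG, hEss, f, hf⟩ := hfe
  intro ι N hfin
  classical
  cases isEmpty_or_nonempty ι with
  | inl hempty =>
    rw [iInf_of_empty]
    exact top_ne_bot
  | inr hne =>
    haveI := hSS
    haveI : Module.Finite R ↥S := Module.Finite.iff_fg.mpr hFG
    haveI : IsArtinian R ↥S := (IsSemisimpleModule.finite_tfae.out 0 2).mp ‹_›
    set T : ι → Submodule R ↥S := fun i => Submodule.comap S.subtype (Submodule.map f (N i))
      with hT
    obtain ⟨K, hKmem, hmin⟩ := IsArtinian.set_has_minimal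
      (Set.range fun s : Finset ι => ⨅ i ∈ s, T i) ⟨_, Set.mem_range_self (∅ : Finset ι)⟩
    obtain ⟨s₀, rfl⟩ := hKmem
    have hKle : ∀ i, (⨅ j ∈ s₀, T j) ≤ T i := by
      intro i
      have h1 : (⨅ j ∈ insert i s₀, T j) ≤ ⨅ j ∈ s₀, T j :=
        le_iInf₂ fun j hj => iInf₂_le j (Finset.mem_insert_of_mem hj)
      have h2 := hmin _ (Set.mem_range_self (insert i s₀))
      have heq : (⨅ j ∈ insert i s₀, T j) = ⨅ j ∈ s₀, T j :=
        h1.lt_or_eq.resolve_left h2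
      calc (⨅ j ∈ s₀, T j) = ⨅ j ∈ insert i s₀, T j := heq.symm
        _ ≤ T i := iInf₂_le i (Finset.mem_insert_self _ _)
    -- K is nonzero
    obtain ⟨x, hx, hx0⟩ := (Submodule.ne_bot_iff _).1 (hfin s₀)
    have hW : S ⊓ (⨅ i ∈ s₀, Submodule.map f (N i)) ≠ ⊥ := by
      refine hEss _ ?_
      refine (Submodule.ne_bot_iff _).2 ⟨f x, ?_, fun h0 => hx0 (hf (by simpa using h0))⟩
      exact (Submodule.mem_iInf _).2 fun i => (Submodule.mem_iInf _).2 fun hi =>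
        Submodule.mem_map_of_mem ((Submodule.mem_iInf _).1 ((Submodule.mem_iInf _).1 hx i) hi)
    obtain ⟨y, hy, hy0⟩ := (Submodule.ne_bot_iff _).1 hW
    have hyS : y ∈ S := hy.1
    have hKne : (⨅ j ∈ s₀, T j) ≠ ⊥ := by
      refine (Submodule.ne_bot_iff _).2 ⟨⟨y, hyS⟩, ?_, fun h0 => hy0 (by
        simpa using congrArg (S.subtype) h0)⟩
      refine (Submodule.mem_iInf _).2 fun j => (Submodule.mem_iInf _).2 fun hj => ?_
      exact Submodule.mem_comap.2
        ((Submodule.mem_iInf _).1 ((Submodule.mem_iInf _).1 hy.2 j) hj)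
    have hTne : (⨅ i, T i) ≠ ⊥ := fun h =>
      hKne (le_bot_iff.1 (h ▸ le_iInf hKle))
    obtain ⟨z, hz, hz0⟩ := (Submodule.ne_bot_iff _).1 hTne
    have hzmem : ∀ i, (z : ↥E) ∈ Submodule.map f (N i) :=
      fun i => Submodule.mem_comap.1 ((Submodule.mem_iInf _).1 hz i)
    obtain ⟨i₀⟩ := hne
    obtain ⟨y₀, hy₀, hy₀z⟩ := hzmem i₀
    have hally : ∀ i, y₀ ∈ N i := by
      intro i
      obtain ⟨w, hw, hwz⟩ := hzmem i
      have : w = y₀ := hf (by rw [hwz, hy₀z])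
      rwa [this] at hw
    refine (Submodule.ne_bot_iff _).2 ⟨y₀, (Submodule.mem_iInf _).2 hally, fun h0 => ?_⟩
    apply hz0
    have : (z : ↥E) = 0 := by rw [← hy₀z, h0, map_zero]
    exact Subtype.ext this

end Forward

section Reverse
variable {R : Type u} [CommRing R] {M : Type u} [AddCommGroup M] [Module R M]

lemma FE.reverse [Nontrivial M]
    (hFIP : ∀ (ι : Type u) (N : ι → Submodule R M),
      (∀ s : Finset ι, (⨅ i ∈ s, N i) ≠ ⊥) → (⨅ i, N i) ≠ ⊥) :
    FinitelyEmbedded R M := by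
  classical
  let M₀ : ModuleCat.{u} R := ModuleCat.of R M
  haveI : CategoryTheory.EnoughInjectives (ModuleCat.{u} R) := inferInstance
  set E₀ : ModuleCat.{u} R := CategoryTheory.Injective.under M₀ with hE₀
  let f₀ : M →ₗ[R] E₀ := (CategoryTheory.Injective.ι M₀).hom
  have hf₀ : Function.Injective f₀ :=
    (ModuleCat.mono_iff_injective (CategoryTheory.Injective.ι M₀)).mp
      (CategoryTheory.Injective.ι_mono M₀)
  haveI hE₀inj : Module.Injective R E₀ :=
    Module.injective_module_of_injective_object R E₀
      (inj := inferInstanceAs (CategoryTheory.Injective E₀))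
  set M' : Submodule R E₀ := LinearMap.range f₀ with hM'
  -- Zorn 1 : maximal essential extension of M' inside E₀
  set A : Set (Submodule R E₀) :=
    {D | M' ≤ D ∧ ∀ P : Submodule R E₀, P ≤ D → P ≠ ⊥ → M' ⊓ P ≠ ⊥} with hA
  have hM'A : M' ∈ A := ⟨le_rfl, fun P hP hPne => by
    rw [inf_eq_right.mpr hP]; exact hPne⟩
  obtain ⟨Em, hM'Em, hEmmax⟩ := zorn_le_nonempty₀ A (fun c hcA hchain y hy => by
    refine ⟨sSup c, ⟨(hcA hy).1.trans (le_sSup hy), fun P hP hPne => ?_⟩,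
      fun z hz => le_sSup hz⟩
    obtain ⟨x, hx, hx0⟩ := (Submodule.ne_bot_iff _).1 hPne
    obtain ⟨D, hDc, hxD⟩ := (Submodule.mem_sSup_of_directed ⟨y, hy⟩
      hchain.directedOn).1 (hP hx)
    have hspan : Submodule.span R {x} ≠ ⊥ := by
      simpa [Submodule.span_singleton_eq_bot] using hx0
    have h1 : M' ⊓ Submodule.span R {x} ≠ ⊥ :=
      (hcA hDc).2 _ ((Submodule.span_singleton_le_iff_mem _ _).2 hxD) hspan
    intro hbot
    exact h1 (le_bot_iff.1 (hbot ▸ inf_le_inf_left M'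
      ((Submodule.span_singleton_le_iff_mem _ _).2 hx)))) M' hM'A
  have hEmA : Em ∈ A := hEmmax.prop
  -- Zorn 2 : maximal complement to Em
  set B : Set (Submodule R E₀) := {C | Em ⊓ C = ⊥} with hB
  have hbotB : (⊥ : Submodule R E₀) ∈ B := by simp [hB]
  obtain ⟨C, -, hCmax⟩ := zorn_le_nonempty₀ B (fun c hcB hchain y hy => by
    refine ⟨sSup c, ?_, fun z hz => le_sSup hz⟩
    rw [hB, Set.mem_setOf_eq, eq_bot_iff]
    rintro x ⟨hxEm, hxs⟩
    obtain ⟨D, hDc, hxD⟩ := (Submodule.mem_sSup_of_directed ⟨y, hy⟩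
      hchain.directedOn).1 hxs
    exact (hcB hDc) ▸ Submodule.mem_inf.2 ⟨hxEm, hxD⟩) ⊥ hbotB
  have hCB : Em ⊓ C = ⊥ := hCmax.prop
  -- the quotient map and extension
  set j : ↥Em →ₗ[R] (E₀ ⧸ C) := C.mkQ ∘ₗ Em.subtype with hj
  have hjinj : Function.Injective j := by
    intro a b hab
    have : (a : E₀) - b ∈ C := by
      rwa [← Submodule.Quotient.mk_eq_zero C, Submodule.Quotient.mk_sub,
        sub_eq_zero]
    have h0 : (a : E₀) - b ∈ Em ⊓ C := ⟨Submodule.sub_mem Em a.2 b.2, this⟩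
    rw [hCB] at h0
    exact Subtype.ext (sub_eq_zero.1 h0)
  obtain ⟨h, hh⟩ := hE₀inj.out j hjinj Em.subtype
  set W : Submodule R (E₀ ⧸ C) := Submodule.map C.mkQ Em with hW
  -- W is essential in E₀ ⧸ C
  have hWess : ∀ P : Submodule R (E₀ ⧸ C), P ≠ ⊥ → ∃ w, (w ∈ W ⊓ P ∧ w ≠ 0) := by
    intro P hPne
    have hle : C ≤ Submodule.comap C.mkQ P := by
      intro x hx
      have : C.mkQ x = 0 := (Submodule.Quotient.mk_eq_zero C).2 hx
      rw [Submodule.mem_comap, this]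
      exact Submodule.zero_mem P
    have hlt : C < Submodule.comap C.mkQ P := by
      refine lt_of_le_of_ne hle fun heq => hPne ?_
      have hmc : Submodule.map C.mkQ (Submodule.comap C.mkQ P) = P := by
        rw [Submodule.map_comap_eq, Submodule.range_mkQ, top_inf_eq]
      rw [← hmc, ← heq, eq_bot_iff]
      rintro w ⟨x, hxC, rfl⟩
      simpa using (Submodule.Quotient.mk_eq_zero C).2 hxC
    have hEmP : Em ⊓ Submodule.comap C.mkQ P ≠ ⊥ := by
      intro hbot
      exact hlt.not_ge (hCmax.2 hbot hlt.le)
    obtain ⟨x, hx, hx0⟩ := (Submodule.ne_bot_iff _).1 hEmP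
    refine ⟨C.mkQ x, ⟨Submodule.mem_map_of_mem hx.1, Submodule.mem_comap.1 hx.2⟩,
      fun h0 => ?_⟩
    have hxC : x ∈ C := (Submodule.Quotient.mk_eq_zero C).1 h0
    have : x ∈ Em ⊓ C := ⟨hx.1, hxC⟩
    rw [hCB] at this
    exact hx0 this
  -- h is injective
  have hinj : Function.Injective h := by
    rw [← LinearMap.ker_eq_bot]
    by_contra hker
    obtain ⟨w, hw, hw0⟩ := hWess _ hker
    obtain ⟨x, hxEm, hxw⟩ := hw.1
    have hx0 : h w = 0 := hw.2
    have : x = 0 := by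
      have := hh ⟨x, hxEm⟩
      simp only [hj, LinearMap.comp_apply, Submodule.subtype_apply] at this
      rw [hxw] at this
      rw [hx0] at this
      exact this.symm
    exact hw0 (by rw [← hxw, this, map_zero])
  -- Em ≤ range h
  have hEmle : Em ≤ LinearMap.range h := by
    intro x hx
    exact ⟨j ⟨x, hx⟩, hh ⟨x, hx⟩⟩
  -- range h is an essential extension of M', so equals Em
  have hrangeA : LinearMap.range h ∈ A := by
    refine ⟨hM'Em.trans hEmle, fun P hP hPne => ?_⟩
    have hP₀ne : Submodule.comap h P ≠ ⊥ := by
      obtain ⟨x, hx, hx0⟩ := (Submodule.ne_bot_iff _).1 hPne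
      obtain ⟨z, rfl⟩ := hP hx
      refine (Submodule.ne_bot_iff _).2 ⟨z, Submodule.mem_comap.2 hx, fun hz => ?_⟩
      exact hx0 (by rw [hz, map_zero])
    obtain ⟨w, hw, hw0⟩ := hWess _ hP₀ne
    obtain ⟨x, hxEm, hxw⟩ := hw.1
    have hhwx : h w = x := by
      have := hh ⟨x, hxEm⟩
      simp only [hj, LinearMap.comp_apply, Submodule.subtype_apply] at this
      rw [hxw] at this
      exact this
    have hEmPne : Em ⊓ P ≠ ⊥ := by
      refine (Submodule.ne_bot_iff _).2 ⟨h w, ⟨hhwx ▸ hxEm, Submodule.mem_comap.1 hw.2⟩,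
        fun h0 => hw0 (hinj (by rw [h0, map_zero]))⟩
    have := hEmA.2 (Em ⊓ P) inf_le_left hEmPne
    intro hbot
    refine this (le_bot_iff.1 ?_)
    rw [← hbot]
    exact le_inf inf_le_left (inf_le_right.trans inf_le_right)
  have hrangeEm : LinearMap.range h = Em :=
    le_antisymm (hEmmax.2 hrangeA hEmle) hEmle
  -- j is surjective, so Em ⊔ C = ⊤
  have hjsurj : Function.Surjective j := by
    intro z
    have hz : h z ∈ Em := hrangeEm ▸ LinearMap.mem_range_self h z
    refine ⟨⟨h z, hz⟩, hinj ?_⟩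
    exact hh ⟨h z, hz⟩
  have hcompl : IsCompl Em C := by
    constructor
    · exact disjoint_iff.2 hCB
    · rw [codisjoint_iff, eq_top_iff]
      intro e _
      obtain ⟨x, hx⟩ := hjsurj (C.mkQ e)
      have hec : e - (x : E₀) ∈ C := by
        rw [← Submodule.Quotient.mk_eq_zero C, Submodule.Quotient.mk_sub]
        have : C.mkQ (x : E₀) = C.mkQ e := hx
        show C.mkQ e - C.mkQ (x : E₀) = 0
        rw [this, sub_self]
      have : e = (x : E₀) + (e - (x : E₀)) := by abel
      rw [this]
      exact Submodule.add_mem_sup x.2 hec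
  -- Em is an injective module
  haveI hEminj : Module.Injective R ↥Em := by
    refine ⟨fun X Y _ _ _ _ fXY hfXY g => ?_⟩
    obtain ⟨h', hh'⟩ := hE₀inj.out fXY hfXY (Em.subtype ∘ₗ g)
    refine ⟨(Em.linearProjOfIsCompl C hcompl) ∘ₗ h', fun x => ?_⟩
    simp only [LinearMap.comp_apply]
    rw [hh' x]
    exact Submodule.linearProjOfIsCompl_apply_left hcompl (g x)
  -- the embedding of M into Em
  set fM : M →ₗ[R] ↥Em := f₀.codRestrict Em (fun x => hM'Em ⟨x, rfl⟩) with hfM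
  have hfMinj : Function.Injective fM := fun a b hab =>
    hf₀ (congrArg Subtype.val hab)
  haveI : Nontrivial ↥Em := by
    obtain ⟨x, y, hxy⟩ := exists_pair_ne M
    exact ⟨fM x, fM y, fun hc => hxy (hfMinj hc)⟩
  -- FIP transfers to Em
  have hFIPEm : ∀ (ι : Type u) (Q : ι → Submodule R ↥Em),
      (∀ s : Finset ι, (⨅ i ∈ s, Q i) ≠ ⊥) → (⨅ i, Q i) ≠ ⊥ := by
    intro ι Q hfin
    cases isEmpty_or_nonempty ι with
    | inl hempty => rw [iInf_of_empty]; exact top_ne_bot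
    | inr hne =>
      set Nfam : ι → Submodule R M :=
        fun i => Submodule.comap f₀ (Submodule.map Em.subtype (Q i)) with hNfam
      have hNfin : ∀ s : Finset ι, (⨅ i ∈ s, Nfam i) ≠ ⊥ := by
        intro s
        obtain ⟨z, hz, hz0⟩ := (Submodule.ne_bot_iff _).1 (hfin s)
        have hzcoe : (z : E₀) ≠ 0 := fun hc => hz0 (Subtype.ext hc)
        have hspan : Submodule.span R {(z : E₀)} ≠ ⊥ := by
          simpa [Submodule.span_singleton_eq_bot] using hzcoe
        have hsle : Submodule.span R {(z : E₀)} ≤ Em :=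
          (Submodule.span_singleton_le_iff_mem _ _).2 z.2
        obtain ⟨w, hw, hw0⟩ := (Submodule.ne_bot_iff _).1 (hEmA.2 _ hsle hspan)
        obtain ⟨y, hy⟩ := hw.1
        have hwmem : ∀ i ∈ s, w ∈ Submodule.map Em.subtype (Q i) := by
          intro i hi
          have h1 : Submodule.span R {(z : E₀)} ≤ Submodule.map Em.subtype (Q i) := by
            refine (Submodule.span_singleton_le_iff_mem _ _).2 ?_
            exact Submodule.mem_map_of_mem
              ((Submodule.mem_iInf _).1 ((Submodule.mem_iInf _).1 hz i) hi)
          exact h1 hw.2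
        refine (Submodule.ne_bot_iff _).2 ⟨y, ?_, fun h0 => hw0 (by rw [← hy, h0, map_zero])⟩
        refine (Submodule.mem_iInf _).2 fun i => (Submodule.mem_iInf _).2 fun hi => ?_
        exact Submodule.mem_comap.2 (hy ▸ hwmem i hi)
      have hcon := hFIP ι Nfam hNfin
      obtain ⟨y, hy, hy0⟩ := (Submodule.ne_bot_iff _).1 hcon
      have hyi : ∀ i, f₀ y ∈ Submodule.map Em.subtype (Q i) :=
        fun i => Submodule.mem_comap.1 ((Submodule.mem_iInf _).1 hy i)
      obtain ⟨i₀⟩ := hne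
      obtain ⟨z₀, _, hz₀⟩ := hyi i₀
      have hfyEm : f₀ y ∈ Em := hz₀ ▸ z₀.2
      have hallz : ∀ i, (⟨f₀ y, hfyEm⟩ : ↥Em) ∈ Q i := by
        intro i
        obtain ⟨w, hwel, hwz⟩ := hyi i
        have : w = (⟨f₀ y, hfyEm⟩ : ↥Em) := Subtype.ext hwz
        rwa [this] at hwel
      refine (Submodule.ne_bot_iff _).2 ⟨⟨f₀ y, hfyEm⟩, (Submodule.mem_iInf _).2 hallz,
        fun h0 => ?_⟩
      have : f₀ y = 0 := congrArg Subtype.val h0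
      exact hy0 (hf₀ (by rw [this, map_zero]))
  -- assemble
  haveI : Nontrivial ↑(ModuleCat.of R ↥Em) := inferInstanceAs (Nontrivial ↥Em)
  refine ⟨ModuleCat.of R ↥Em, ?_, ?_⟩
  · exact hEminj
  · exact ⟨FE.socle R ↥Em, FE.socle_isSemisimple ↥Em, FE.socle_fg hFIPEm,
      fun P hPne => FE.socle_essential hFIPEm P hPne, fM, hfMinj⟩

end Reverse

theorem finitelyEmbedded_iff_finite_intersection (R : Type u) [CommRing R] (M : Type u)
    [AddCommGroup M] [Module R M] [Nontrivial M] :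
    FinitelyEmbedded R M ↔
      ∀ (ι : Type u) (N : ι → Submodule R M),
        (∀ s : Finset ι, (⨅ i ∈ s, N i) ≠ ⊥) → (⨅ i, N i) ≠ ⊥ := by
  exact ⟨fun h => FE.forward h, fun h => FE.reverse h⟩
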